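/- Let R₁ and R₂ be commutative rings with identity, I₁ an ideal of R₁, and P₁ an I₁-prime ideal of R₁. Then P₁ × R₂ is an (I₁ × R₂)-prime ideal of the product ring R₁ × R₂. -/

import Mathlib

/-- A proper ideal `P` of a commutative ring `R` is `I`-prime if whenever
`a * b ∈ P \ I*P`, then `a ∈ P` or `b ∈ P`. -/
def IsIPrime {R : Type*} [CommRing R] (I P : Ideal R) : Prop :=
  P ≠ ⊤ ∧ ∀ a b : R, a * b ∈ P → a * b ∉ I * P → a ∈ P ∨ b ∈ P

/-- A proper ideal `Q` is weakly prime if whenever `a * b ∈ Q \ {0}`,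
then `a ∈ Q` or `b ∈ Q`. -/
def IsWeaklyPrime {R : Type*} [CommRing R] (Q : Ideal R) : Prop :=
  Q ≠ ⊤ ∧ ∀ a b : R, a * b ∈ Q → a * b ≠ 0 → a ∈ Q ∨ b ∈ Q

lemma prod_mul_prod_top {R₁ R₂ : Type*} [CommRing R₁] [CommRing R₂]
    (I P : Ideal R₁) :
    Ideal.prod I (⊤ : Ideal R₂) * Ideal.prod P (⊤ : Ideal R₂) =
      Ideal.prod (I * P) (⊤ : Ideal R₂) := by
  apply le_antisymm
  · apply Ideal.mul_le.2
    rintro ⟨i, s⟩ hi ⟨p, t⟩ hp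
    rw [Ideal.mem_prod] at hi hp ⊢
    exact ⟨Ideal.mul_mem_mul hi.1 hp.1, trivial⟩
  · rintro ⟨x, s⟩ hx
    rw [Ideal.mem_prod] at hx
    have h1 : ((x, 0) : R₁ × R₂) ∈ Ideal.prod I (⊤ : Ideal R₂) * Ideal.prod P ⊤ := by
      refine Submodule.mul_induction_on (show x ∈ I * P from hx.1) (fun i hi p hp => ?_) (fun a b ha hb => ?_)
      · have : ((i * p, 0) : R₁ × R₂) = (i, 0) * (p, 0) := by simp
        rw [this]
        exact Ideal.mul_mem_mul ((Ideal.mem_prod _ _).2 ⟨hi, trivial⟩)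
          ((Ideal.mem_prod _ _).2 ⟨hp, trivial⟩)
      · have : ((a + b, 0) : R₁ × R₂) = (a, 0) + (b, 0) := by simp
        rw [this]; exact add_mem ha hb
    have h2 : ((0, s) : R₁ × R₂) ∈ Ideal.prod I (⊤ : Ideal R₂) * Ideal.prod P ⊤ := by
      have : ((0, s) : R₁ × R₂) = (0, 1) * (0, s) := by simp
      rw [this]
      exact Ideal.mul_mem_mul ((Ideal.mem_prod _ _).2 ⟨zero_mem _, trivial⟩)
        ((Ideal.mem_prod _ _).2 ⟨zero_mem _, trivial⟩)
    have : ((x, s) : R₁ × R₂) = (x, 0) + (0, s) := by simp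
    rw [this]; exact add_mem h1 h2

theorem stmt_13 {R₁ R₂ : Type*} [CommRing R₁] [CommRing R₂]
    (I₁ P₁ : Ideal R₁) (hP₁ : IsIPrime I₁ P₁) :
    IsIPrime (Ideal.prod I₁ (⊤ : Ideal R₂)) (Ideal.prod P₁ (⊤ : Ideal R₂)) := by
  obtain ⟨hne, hP⟩ := hP₁
  constructor
  · intro h
    apply hne
    rw [Ideal.eq_top_iff_one] at h ⊢
    exact ((Ideal.mem_prod _ _).1 h).1
  · rintro ⟨a₁, a₂⟩ ⟨b₁, b₂⟩ hab hnab
    rw [prod_mul_prod_top] at hnab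
    rw [Prod.mk_mul_mk, Ideal.mem_prod] at hab hnab
    have := hP a₁ b₁ hab.1 (fun h => hnab ⟨h, trivial⟩)
    rcases this with h | h
    · exact Or.inl ((Ideal.mem_prod _ _).2 ⟨h, trivial⟩)
    · exact Or.inr ((Ideal.mem_prod _ _).2 ⟨h, trivial⟩)
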